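/- There is an absolute constant c > 0 such that for every k ≥ 2, any connected integral circulant graph G(n;S) of degree k = #S satisfies n ≤ exp(c √(k log log(k+2)) · log k). Equivalently, the largest number N(k) of vertices of a connected integral circulant graph of degree k is at most exp(c √(k log log(k+2)) log k). -/

import Mathlib

open Complex Real

namespace Stmt8

open IntermediateField

lemma sum_le_prod_of_two_le (B : Finset ℕ) (g : ℕ → ℕ) (h : ∀ b ∈ B, 2 ≤ g b) :
    ∑ b ∈ B, g b ≤ ∏ b ∈ B, g b := by
  induction B using Finset.induction_on with
  | empty => simp
  | @insert a T ha ih =>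
    rw [Finset.sum_insert ha, Finset.prod_insert ha]
    have h2 : 2 ≤ g a := h a (Finset.mem_insert_self a T)
    have hT : ∀ b ∈ T, 2 ≤ g b := fun b hb => h b (Finset.mem_insert_of_mem hb)
    have hP : ∑ b ∈ T, g b ≤ ∏ b ∈ T, g b := ih hT
    rcases T.eq_empty_or_nonempty with rfl | hne
    · simp
    · obtain ⟨b, hb⟩ := hne
      have hP2 : 2 ≤ ∏ x ∈ T, g x := le_trans (hT b hb)
        (Finset.single_le_prod' (fun x hx => le_trans one_le_two (hT x hx)) hb)
      nlinarith

lemma card_sq_le_two_sum_add (T : Finset ℕ) :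
    T.card * T.card ≤ 2 * ∑ x ∈ T, x + T.card := by
  induction T using Finset.induction_on_max with
  | empty => simp
  | insert a T hmax ih =>
    have haT : a ∉ T := fun h => lt_irrefl a (hmax a h)
    rw [Finset.sum_insert haT, Finset.card_insert_of_notMem haT]
    have hcard : T.card ≤ a := by
      have hsub : T ⊆ Finset.range a := fun x hx => Finset.mem_range.mpr (hmax x hx)
      simpa using Finset.card_le_card hsub
    have e1 : (T.card + 1) * (T.card + 1) = T.card * T.card + 2 * T.card + 1 := by ring
    rw [e1]
    have h2 := add_le_add (add_le_add ih (Nat.mul_le_mul_left 2 hcard)) (le_refl 1)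
    exact le_trans h2 (by omega)

lemma totient_prod_primes (A : Finset ℕ) (hA : ∀ p ∈ A, Nat.Prime p) :
    (∏ p ∈ A, p).totient = ∏ p ∈ A, (p - 1) := by
  induction A using Finset.induction_on with
  | empty => simp
  | @insert a T ha ih =>
    have hap := hA a (Finset.mem_insert_self a T)
    have hT : ∀ p ∈ T, Nat.Prime p := fun p hp => hA p (Finset.mem_insert_of_mem hp)
    have hcop : Nat.Coprime a (∏ p ∈ T, p) :=
      Nat.Coprime.prod_right fun p hp =>
        (Nat.coprime_primes hap (hT p hp)).mpr (fun e => ha (e ▸ hp))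
    rw [Finset.prod_insert ha, Finset.prod_insert ha, Nat.totient_mul hcop, ih hT,
      Nat.totient_prime hap]

lemma geom_sum_prim (n : ℕ) {ζ : ℂ} (hζ : IsPrimitiveRoot ζ n) (x : ℕ) :
    ∑ j ∈ Finset.range n, (ζ ^ x) ^ j = if n ∣ x then (n : ℂ) else 0 := by
  by_cases h : n ∣ x
  · simp [h, (hζ.pow_eq_one_iff_dvd x).mpr h]
  · rw [if_neg h]
    have hne : ζ ^ x ≠ 1 := fun e => h ((hζ.pow_eq_one_iff_dvd x).mp e)
    rw [geom_sum_eq hne]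
    have hone : (ζ ^ x) ^ n = 1 := by
      rw [← pow_mul, mul_comm, pow_mul, hζ.pow_eq_one, one_pow]
    simp [hone]

lemma key_sum_eq (n : ℕ) (hn : 0 < n) {ζ : ℂ} (hζ : IsPrimitiveRoot ζ n)
    (u : ℕ) (hu : Nat.Coprime u n) (S : Finset ℕ) (e : ℕ → ℕ) (m : ℤ)
    (h : ∑ s ∈ S, ζ ^ (e s) = (m : ℂ)) :
    ∑ s ∈ S, ζ ^ (u * e s) = (m : ℂ) := by
  have hint : IsIntegral ℚ ζ := (hζ.isIntegral hn).tower_top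
  let pb := IntermediateField.adjoin.powerBasis hint
  have hg : algebraMap ℚ⟮ζ⟯ ℂ pb.gen = ζ := by
    rw [IntermediateField.adjoin.powerBasis_gen]
    exact IntermediateField.AdjoinSimple.algebraMap_gen ℚ ζ
  have hmin : minpoly ℚ pb.gen = Polynomial.cyclotomic n ℚ := by
    rw [← minpoly.algebraMap_eq (algebraMap ℚ⟮ζ⟯ ℂ).injective, hg,
      ← Polynomial.cyclotomic_eq_minpoly_rat hζ hn]
  have hroot : Polynomial.aeval (ζ ^ u) (minpoly ℚ pb.gen) = 0 := by
    rw [hmin, Polynomial.aeval_def, ← Polynomial.eval_map, Polynomial.map_cyclotomic]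
    exact (hζ.pow_of_coprime u hu).isRoot_cyclotomic hn
  let σ := pb.lift (ζ ^ u) hroot
  let ξ : ℚ⟮ζ⟯ := IntermediateField.AdjoinSimple.gen ℚ ζ
  have hξ : algebraMap ℚ⟮ζ⟯ ℂ ξ = ζ := IntermediateField.AdjoinSimple.algebraMap_gen ℚ ζ
  have hΛ : (algebraMap ℚ⟮ζ⟯ ℂ) (∑ s ∈ S, ξ ^ e s) = (m : ℂ) := by
    rw [map_sum]
    simp_rw [map_pow, hξ]
    exact h
  have hΛ' : (∑ s ∈ S, ξ ^ e s) = (m : ℚ⟮ζ⟯) := by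
    apply (algebraMap ℚ⟮ζ⟯ ℂ).injective
    rw [hΛ, map_intCast]
  have hσξ : σ ξ = ζ ^ u := by
    have : ξ = pb.gen := (IntermediateField.adjoin.powerBasis_gen hint).symm
    rw [this]
    exact pb.lift_gen (ζ ^ u) hroot
  calc ∑ s ∈ S, ζ ^ (u * e s) = σ (∑ s ∈ S, ξ ^ e s) := by
        rw [map_sum]
        refine Finset.sum_congr rfl fun s _ => ?_
        rw [map_pow, hσξ, ← pow_mul]
    _ = σ ((m : ℤ) : ℚ⟮ζ⟯) := by rw [hΛ']
    _ = (m : ℂ) := map_intCast σ m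

lemma exists_unit_mul (n a b : ℕ) (hn : 0 < n) (h : Nat.gcd a n = Nat.gcd b n) :
    ∃ u : ℕ, Nat.Coprime u n ∧ a ≡ u * b [MOD n] := by
  haveI : NeZero n := ⟨hn.ne'⟩
  set d := Nat.gcd b n with hd
  have hdn : d ∣ n := Nat.gcd_dvd_right b n
  have hdb : d ∣ b := Nat.gcd_dvd_left b n
  have hda : d ∣ a := h ▸ Nat.gcd_dvd_left a n
  have hdpos : 0 < d := Nat.gcd_pos_of_pos_right b hn
  set n₁ := n / d with hn₁def
  have hnn : d * n₁ = n := Nat.mul_div_cancel' hdn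
  have hn₁pos : 0 < n₁ := Nat.div_pos (Nat.le_of_dvd hn hdn) hdpos
  haveI : NeZero n₁ := ⟨hn₁pos.ne'⟩
  set a₁ := a / d with ha₁def
  set b₁ := b / d with hb₁def
  have haa : d * a₁ = a := Nat.mul_div_cancel' hda
  have hbb : d * b₁ = b := Nat.mul_div_cancel' hdb
  have hca : Nat.Coprime a₁ n₁ := by
    have : d * Nat.gcd a₁ n₁ = d * 1 := by
      rw [mul_one, ← Nat.gcd_mul_left, hnn, haa, ← h]
    exact Nat.eq_of_mul_eq_mul_left hdpos this
  have hcb : Nat.Coprime b₁ n₁ := by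
    have : d * Nat.gcd b₁ n₁ = d * 1 := by
      rw [mul_one, ← Nat.gcd_mul_left, hnn, hbb, ← hd]
    exact Nat.eq_of_mul_eq_mul_left hdpos this
  have hn₁n : n₁ ∣ n := Dvd.intro_left d hnn
  set A := ZMod.unitOfCoprime a₁ hca
  set B := ZMod.unitOfCoprime b₁ hcb
  obtain ⟨U, hU⟩ := ZMod.unitsMap_surjective hn₁n (A * B⁻¹)
  refine ⟨((U : (ZMod n)ˣ) : ZMod n).val, ZMod.val_coe_unit_coprime U, ?_⟩
  set u := ((U : (ZMod n)ˣ) : ZMod n).val with hu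
  have hu1 : a₁ ≡ u * b₁ [MOD n₁] := by
    have hcast : ((u : ℕ) : ZMod n₁) = ((A * B⁻¹ : (ZMod n₁)ˣ) : ZMod n₁) := by
      rw [hu, ZMod.natCast_val, ← ZMod.castHom_apply (h := hn₁n), ← hU]
      rfl
    rw [Nat.ModEq]
    have : ((a₁ : ℕ) : ZMod n₁) = ((u * b₁ : ℕ) : ZMod n₁) := by
      push_cast
      rw [hcast]
      have hBco : ((B : ZMod n₁)) = (b₁ : ZMod n₁) := ZMod.coe_unitOfCoprime b₁ hcb
      have hAco : ((A : ZMod n₁)) = (a₁ : ZMod n₁) := ZMod.coe_unitOfCoprime a₁ hca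
      rw [← hBco, ← hAco, ← Units.val_mul, inv_mul_cancel_right]
    exact (ZMod.natCast_eq_natCast_iff _ _ _).mp this
  have := Nat.ModEq.mul_left' (c := d) hu1
  rw [haa, hnn] at this
  have e : d * (u * b₁) = u * b := by rw [← hbb]; ring
  exact e ▸ this

lemma dvd_window {n x : ℕ} (hn : 0 < n) (hx : 0 < x) (hlt : x < 2 * n) (hdvd : n ∣ x) :
    x = n := by
  have h1 : n ≤ x := Nat.le_of_dvd hx hdvd
  have h2 : n ∣ x - n := (Nat.dvd_sub hdvd dvd_rfl)
  have h3 : x - n < n := by omega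
  have h4 : x - n = 0 := Nat.eq_zero_of_dvd_of_lt h2 h3
  omega

lemma class_closed (n : ℕ) (hn : 0 < n) (S : Finset ℕ)
    (hS1 : ∀ s ∈ S, 1 ≤ s ∧ s ≤ n - 1)
    (hint : ∀ j : ℕ, j < n → ∃ m : ℤ,
      ∑ s ∈ S, (Complex.exp (2 * ↑Real.pi * Complex.I / n)) ^ (j * s) = (m : ℂ))
    {s₀ : ℕ} (hs₀ : s₀ ∈ S) {t : ℕ} (ht1 : 1 ≤ t) (htn : t < n)
    (hg : Nat.gcd t n = Nat.gcd s₀ n) : t ∈ S := by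
  set ζ : ℂ := Complex.exp (2 * ↑Real.pi * Complex.I / n) with hζdef
  have hζ : IsPrimitiveRoot ζ n := Complex.isPrimitiveRoot_exp n hn.ne'
  obtain ⟨u, hu, hmod⟩ := exists_unit_mul n t s₀ hn hg
  have key2 : ∀ j ∈ Finset.range n, ∑ s ∈ S, ζ ^ (u * (j * s)) = ∑ s ∈ S, ζ ^ (j * s) := by
    intro j hj
    obtain ⟨m, hm⟩ := hint j (Finset.mem_range.mp hj)
    rw [hm]
    exact key_sum_eq n hn hζ u hu S (fun s => j * s) m hm
  have hA : ∀ v : ℕ → ℕ,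
      ∑ j ∈ Finset.range n, (ζ ^ (j * (n - t)) * ∑ s ∈ S, ζ ^ (j * v s))
      = ∑ s ∈ S, (if n ∣ (n - t + v s) then (n : ℂ) else 0) := by
    intro v
    calc ∑ j ∈ Finset.range n, (ζ ^ (j * (n - t)) * ∑ s ∈ S, ζ ^ (j * v s))
        = ∑ j ∈ Finset.range n, ∑ s ∈ S, ζ ^ (j * (n - t)) * ζ ^ (j * v s) := by
          refine Finset.sum_congr rfl fun j _ => Finset.mul_sum _ _ _
      _ = ∑ s ∈ S, ∑ j ∈ Finset.range n, ζ ^ (j * (n - t)) * ζ ^ (j * v s) :=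
          Finset.sum_comm
      _ = ∑ s ∈ S, ∑ j ∈ Finset.range n, (ζ ^ (n - t + v s)) ^ j := by
          refine Finset.sum_congr rfl fun s _ => Finset.sum_congr rfl fun j _ => ?_
          rw [← pow_add, ← pow_mul]
          congr 1
          ring
      _ = ∑ s ∈ S, (if n ∣ (n - t + v s) then (n : ℂ) else 0) :=
          Finset.sum_congr rfl fun s _ => geom_sum_prim n hζ _
  have hAB : ∑ s ∈ S, (if n ∣ (n - t + s) then (n : ℂ) else 0)
      = ∑ s ∈ S, (if n ∣ (n - t + u * s) then (n : ℂ) else 0) := by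
    rw [← hA (fun s => s), ← hA (fun s => u * s)]
    refine Finset.sum_congr rfl fun j hj => ?_
    congr 1
    rw [← key2 j hj]
    refine Finset.sum_congr rfl fun s _ => ?_
    congr 1
    ring
  have hL : ∑ s ∈ S, (if n ∣ (n - t + s) then (n : ℂ) else 0)
      = ((S.filter fun s => n ∣ n - t + s).card : ℂ) * n := by
    rw [← Finset.sum_filter, Finset.sum_const, nsmul_eq_mul]
  have hR : ∑ s ∈ S, (if n ∣ (n - t + u * s) then (n : ℂ) else 0)
      = ((S.filter fun s => n ∣ n - t + u * s).card : ℂ) * n := by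
    rw [← Finset.sum_filter, Finset.sum_const, nsmul_eq_mul]
  have hcards : (S.filter fun s => n ∣ n - t + s).card
      = (S.filter fun s => n ∣ n - t + u * s).card := by
    have hne : (n : ℂ) ≠ 0 := Nat.cast_ne_zero.mpr hn.ne'
    have := hAB
    rw [hL, hR] at this
    exact_mod_cast mul_right_cancel₀ hne this
  have hs₀mem : s₀ ∈ S.filter fun s => n ∣ n - t + u * s := by
    refine Finset.mem_filter.mpr ⟨hs₀, ?_⟩
    have h1 : n - t + u * s₀ ≡ n - t + t [MOD n] := Nat.ModEq.add_left _ hmod.symm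
    have h2 : n - t + t = n := Nat.sub_add_cancel htn.le
    have h3 : n - t + u * s₀ ≡ 0 [MOD n] := by
      rw [h2] at h1
      exact h1.trans (Nat.modEq_zero_iff_dvd.mpr dvd_rfl)
    exact Nat.modEq_zero_iff_dvd.mp h3
  have hpos : 0 < (S.filter fun s => n ∣ n - t + s).card := by
    rw [hcards]
    exact Finset.card_pos.mpr ⟨s₀, hs₀mem⟩
  obtain ⟨s, hsmem⟩ := Finset.card_pos.mp hpos
  obtain ⟨hsS, hsdvd⟩ := Finset.mem_filter.mp hsmem
  have hs1 := (hS1 s hsS).1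
  have hs2 := (hS1 s hsS).2
  have hx : n - t + s = n := by
    refine dvd_window hn (by omega) (by omega) hsdvd
  have : s = t := by omega
  exact this ▸ hsS

lemma exists_not_dvd (n : ℕ) (hn : 0 < n) (S : Finset ℕ)
    (G : SimpleGraph (ZMod n)) (hAdj : ∀ u v : ZMod n, G.Adj u v ↔ (u - v).val ∈ S)
    (hconn : G.Connected) {p : ℕ} (hp : p.Prime) (hpn : p ∣ n) :
    ∃ s ∈ S, ¬ p ∣ s := by
  by_contra hcon
  push_neg at hcon
  haveI : NeZero n := ⟨hn.ne'⟩
  haveI : Fact p.Prime := ⟨hp⟩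
  set f := ZMod.castHom hpn (ZMod p) with hf
  have hstep : ∀ {x y : ZMod n}, G.Adj x y → f x = f y := by
    intro x y hxy
    have h1 : (x - y).val ∈ S := (hAdj x y).mp hxy
    have h2 : p ∣ (x - y).val := hcon _ h1
    have h3 : (((x - y).val : ℕ) : ZMod p) = 0 :=
      (ZMod.natCast_eq_zero_iff _ _).mpr h2
    rw [ZMod.natCast_val, ← ZMod.castHom_apply (h := hpn)] at h3
    have h4 : f x - f y = 0 := by rw [← map_sub]; exact h3
    exact sub_eq_zero.mp h4
  have hwalk : ∀ {a b : ZMod n}, G.Walk a b → f a = f b := by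
    intro a b w
    induction w with
    | nil => rfl
    | cons h _ ih => exact (hstep h).trans ih
  obtain ⟨w⟩ := hconn.preconnected 1 0
  have h10 : f 1 = f 0 := hwalk w
  rw [map_one, map_zero] at h10
  exact one_ne_zero h10

lemma totient_le_card_filter (n : ℕ) (hn : 0 < n) (S : Finset ℕ)
    (hS1 : ∀ s ∈ S, 1 ≤ s ∧ s ≤ n - 1)
    (Hclosed : ∀ s ∈ S, ∀ t : ℕ, 1 ≤ t → t < n → Nat.gcd t n = Nat.gcd s n → t ∈ S)
    {s : ℕ} (hs : s ∈ S) :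
    (n / Nat.gcd s n).totient ≤ (S.filter (fun t => Nat.gcd t n = Nat.gcd s n)).card := by
  set d := Nat.gcd s n with hd
  have hs1 := (hS1 s hs).1
  have hsn : s < n := by have := (hS1 s hs).2; omega
  have hdvd : d ∣ n := Nat.gcd_dvd_right s n
  have hdpos : 0 < d := Nat.gcd_pos_of_pos_left n hs1
  have hds : d ∣ s := Nat.gcd_dvd_left s n
  have hdlt : d < n := lt_of_le_of_lt (Nat.le_of_dvd (by omega) hds) hsn
  set n₁ := n / d with hn₁
  have hnn : d * n₁ = n := Nat.mul_div_cancel' hdvd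
  have hn₁2 : 2 ≤ n₁ := by
    have h0 : 0 < n₁ := Nat.div_pos (Nat.le_of_dvd hn hdvd) hdpos
    by_contra hcon
    push_neg at hcon
    have h1 : n₁ = 1 := by omega
    rw [h1, mul_one] at hnn
    omega
  rw [Nat.totient]
  apply Finset.card_le_card_of_injOn (fun m => d * m)
  · intro m hm
    simp only [Finset.mem_coe, Finset.mem_filter, Finset.mem_range] at hm
    obtain ⟨hmlt, hcop⟩ := hm
    have hm1 : 1 ≤ m := by
      rcases Nat.eq_zero_or_pos m with rfl | h
      · exfalso
        have : n₁ = 1 := by simpa using hcop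
        omega
      · exact h
    have hgcd : Nat.gcd (d * m) n = d := by
      conv_lhs => rw [← hnn]
      rw [Nat.gcd_mul_left, Nat.Coprime.gcd_eq_one hcop.symm, mul_one]
    have hlt : d * m < n := by
      calc d * m < d * n₁ := by exact (Nat.mul_lt_mul_left hdpos).mpr hmlt
        _ = n := hnn
    have hmem : d * m ∈ S := Hclosed s hs (d * m) (Nat.mul_pos hdpos hm1) hlt (by rw [hgcd])
    exact Finset.mem_filter.mpr ⟨hmem, hgcd⟩
  · intro a _ b _ hab
    exact Nat.eq_of_mul_eq_mul_left hdpos hab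

lemma sum_totient_le (n : ℕ) (hn : 0 < n) (S : Finset ℕ)
    (hS1 : ∀ s ∈ S, 1 ≤ s ∧ s ≤ n - 1)
    (Hclosed : ∀ s ∈ S, ∀ t : ℕ, 1 ≤ t → t < n → Nat.gcd t n = Nat.gcd s n → t ∈ S)
    (D : Finset ℕ) (hD : ∀ d ∈ D, ∃ s ∈ S, Nat.gcd s n = d) :
    ∑ d ∈ D, (n / d).totient ≤ S.card := by
  calc ∑ d ∈ D, (n / d).totient
      ≤ ∑ d ∈ D, (S.filter (fun t => Nat.gcd t n = d)).card := by
        refine Finset.sum_le_sum fun d hd => ?_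
        obtain ⟨s, hsS, hsd⟩ := hD d hd
        rw [← hsd]
        exact totient_le_card_filter n hn S hS1 Hclosed hsS
    _ = (D.biUnion (fun d => S.filter (fun t => Nat.gcd t n = d))).card := by
        rw [Finset.card_biUnion]
        intro d₁ h₁ d₂ h₂ hne
        rw [Function.onFun, Finset.disjoint_left]
        intro t ht₁ ht₂
        have e₁ := (Finset.mem_filter.mp ht₁).2
        have e₂ := (Finset.mem_filter.mp ht₂).2
        exact hne (e₁ ▸ e₂ ▸ rfl)
    _ ≤ S.card := Finset.card_le_card (Finset.biUnion_subset.mpr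
        fun d _ => Finset.filter_subset _ _)

lemma main_bound (n k : ℕ) (hn : 0 < n) (hk : 2 ≤ k) (S : Finset ℕ) (hcard : S.card = k)
    (hS1 : ∀ s ∈ S, 1 ≤ s ∧ s ≤ n - 1)
    (Hclosed : ∀ s ∈ S, ∀ t : ℕ, 1 ≤ t → t < n → Nat.gcd t n = Nat.gcd s n → t ∈ S)
    (Hprime : ∀ p : ℕ, p.Prime → p ∣ n → ∃ s ∈ S, ¬ p ∣ s) :
    n ≤ (2 * k) ^ n.primeFactors.card ∧
      n.primeFactors.card * n.primeFactors.card ≤ 6 * k := by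
  classical
  have hpick : ∀ p : ℕ, p.Prime → p ∣ n → ∃ s, s ∈ S ∧ ¬ p ∣ s ∧
      Nat.gcd s n ∣ n ∧ ¬ p ∣ Nat.gcd s n ∧ 0 < n / Nat.gcd s n ∧
      (n / Nat.gcd s n).totient ≤ k := by
    intro p hp hpn
    obtain ⟨s, hsS, hnd⟩ := Hprime p hp hpn
    have hdn : Nat.gcd s n ∣ n := Nat.gcd_dvd_right s n
    have hds : Nat.gcd s n ∣ s := Nat.gcd_dvd_left s n
    have hpd : ¬ p ∣ Nat.gcd s n := fun h => hnd (h.trans hds)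
    have hquot : 0 < n / Nat.gcd s n :=
      Nat.div_pos (Nat.le_of_dvd hn hdn) (Nat.gcd_pos_of_pos_right s hn)
    have htot : (n / Nat.gcd s n).totient ≤ k := by
      have := sum_totient_le n hn S hS1 Hclosed {Nat.gcd s n}
        (by intro d hd; rw [Finset.mem_singleton] at hd; exact ⟨s, hsS, hd ▸ rfl⟩)
      rw [Finset.sum_singleton] at this
      omega
    exact ⟨s, hsS, hnd, hdn, hpd, hquot, htot⟩
  -- prime power bound
  have hpp : ∀ p ∈ n.primeFactors, p ^ (n.factorization p) ≤ 2 * k := by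
    intro p hp
    have hprime : p.Prime := Nat.prime_of_mem_primeFactors hp
    have hpn : p ∣ n := Nat.dvd_of_mem_primeFactors hp
    obtain ⟨s, hsS, hnd, hdn, hpd, hquot, htot⟩ := hpick p hprime hpn
    set d := Nat.gcd s n with hddef
    set a := n.factorization p with hadef
    have hq : p ^ a ∣ n := Nat.ordProj_dvd n p
    have hcop : Nat.Coprime (p ^ a) d :=
      Nat.Coprime.pow_left a ((Nat.Prime.coprime_iff_not_dvd hprime).mpr hpd)
    have hqd : p ^ a ∣ n / d := by
      refine hcop.dvd_of_dvd_mul_left ?_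
      rw [Nat.mul_div_cancel' hdn]
      exact hq
    have h1 : (p ^ a).totient ≤ (n / d).totient :=
      Nat.le_of_dvd (Nat.totient_pos.mpr hquot) (Nat.totient_dvd_of_dvd hqd)
    have ha : 0 < a := hprime.factorization_pos_of_dvd hn.ne' hpn
    have h3 : p ^ a ≤ 2 * (p ^ a).totient := by
      rw [Nat.totient_prime_pow hprime ha]
      have he : p ^ a = p ^ (a - 1) * p := by
        rw [← pow_succ]
        congr 1
        omega
      rw [he]
      have hp2 : 2 ≤ p := hprime.two_le
      calc p ^ (a - 1) * p ≤ p ^ (a - 1) * (2 * (p - 1)) :=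
            Nat.mul_le_mul_left _ (by omega)
        _ = 2 * (p ^ (a - 1) * (p - 1)) := by ring
    omega
  constructor
  · -- n ≤ (2k)^t
    have hfact : n = ∏ p ∈ n.primeFactors, p ^ (n.factorization p) := by
      conv_lhs => rw [← Nat.factorization_prod_pow_eq_self hn.ne']
      rw [Finsupp.prod, Nat.support_factorization]
    calc n = ∏ p ∈ n.primeFactors, p ^ (n.factorization p) := hfact
      _ ≤ ∏ _p ∈ n.primeFactors, (2 * k) := Finset.prod_le_prod' hpp
      _ = (2 * k) ^ n.primeFactors.card := Finset.prod_const _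
  · -- card bound
    set Podd := n.primeFactors.filter (fun p => p ≠ 2) with hPodd
    have hPfact : ∀ p ∈ Podd, p.Prime ∧ p ∣ n ∧ p ≠ 2 := by
      intro p hp
      obtain ⟨h1, h2⟩ := Finset.mem_filter.mp hp
      exact ⟨Nat.prime_of_mem_primeFactors h1, Nat.dvd_of_mem_primeFactors h1, h2⟩
    -- choice of class representative gcd
    have hex : ∀ p ∈ Podd, ∃ d : ℕ, (∃ s ∈ S, Nat.gcd s n = d) ∧ ¬ p ∣ d ∧ d ∣ n ∧
        0 < n / d := by
      intro p hp
      obtain ⟨hprime, hpn, _⟩ := hPfact p hp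
      obtain ⟨s, hsS, hnd, hdn, hpd, hquot, htot⟩ := hpick p hprime hpn
      exact ⟨Nat.gcd s n, ⟨s, hsS, rfl⟩, hpd, hdn, hquot⟩
    -- define f by choice
    let f : ℕ → ℕ := fun p =>
      if h : ∃ d : ℕ, (∃ s ∈ S, Nat.gcd s n = d) ∧ ¬ p ∣ d ∧ d ∣ n ∧ 0 < n / d
      then h.choose else 1
    have hf : ∀ p ∈ Podd, (∃ s ∈ S, Nat.gcd s n = f p) ∧ ¬ p ∣ f p ∧ f p ∣ n ∧
        0 < n / f p := by
      intro p hp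
      have h := hex p hp
      simp only [f, dif_pos h]
      exact h.choose_spec
    have hsum : ∑ p ∈ Podd, (p - 1) ≤ k := by
      have hmaps : ∀ p ∈ Podd, f p ∈ Podd.image f := fun p hp =>
        Finset.mem_image_of_mem f hp
      rw [← Finset.sum_fiberwise_of_maps_to hmaps (fun p => p - 1)]
      calc ∑ d ∈ Podd.image f, ∑ p ∈ Podd.filter (fun p => f p = d), (p - 1)
          ≤ ∑ d ∈ Podd.image f, (n / d).totient := by
            refine Finset.sum_le_sum fun d hd => ?_
            obtain ⟨p₀, hp₀, hfp₀⟩ := Finset.mem_image.mp hd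
            obtain ⟨_, _, hdn, hquot⟩ := hfp₀ ▸ hf p₀ hp₀
            set A := Podd.filter (fun p => f p = d) with hA
            have hAfact : ∀ p ∈ A, p.Prime ∧ p ∣ n / d ∧ 3 ≤ p := by
              intro p hp
              obtain ⟨hp1, hp2⟩ := Finset.mem_filter.mp hp
              obtain ⟨hprime, hpn, hne2⟩ := hPfact p hp1
              obtain ⟨_, hpd, _, _⟩ := hf p hp1
              rw [hp2] at hpd
              have hcop : Nat.Coprime p d :=
                (Nat.Prime.coprime_iff_not_dvd hprime).mpr hpd
              have hpnd : p ∣ n / d := by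
                refine hcop.dvd_of_dvd_mul_left ?_
                rw [Nat.mul_div_cancel' hdn]
                exact hpn
              have h3 : 3 ≤ p := by
                have := hprime.two_le
                omega
              exact ⟨hprime, hpnd, h3⟩
            calc ∑ p ∈ A, (p - 1) ≤ ∏ p ∈ A, (p - 1) :=
                  sum_le_prod_of_two_le A (fun p => p - 1)
                    (fun p hp => by have h3 := (hAfact p hp).2.2; show 2 ≤ p - 1; omega)
              _ = (∏ p ∈ A, p).totient :=
                  (totient_prod_primes A (fun p hp => (hAfact p hp).1)).symm
              _ ≤ (n / d).totient := by
                  refine Nat.le_of_dvd (Nat.totient_pos.mpr hquot)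
                    (Nat.totient_dvd_of_dvd ?_)
                  refine Finset.prod_primes_dvd _ (fun p hp => (hAfact p hp).1.prime)
                    (fun p hp => (hAfact p hp).2.1)
        _ ≤ S.card := by
            refine sum_totient_le n hn S hS1 Hclosed (Podd.image f) ?_
            intro d hd
            obtain ⟨p₀, hp₀, hfp₀⟩ := Finset.mem_image.mp hd
            exact hfp₀ ▸ (hf p₀ hp₀).1
        _ = k := hcard
    -- now pure arithmetic
    have hcards : Podd.card * Podd.card ≤ 2 * (∑ p ∈ Podd, (p - 1)) + Podd.card := by
      set T := Podd.image (fun p => p - 1) with hT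
      have hinj : Set.InjOn (fun p => p - 1) Podd := by
        intro a ha b hb hab
        have h2a : 2 ≤ a := (hPfact a ha).1.two_le
        have h2b : 2 ≤ b := (hPfact b hb).1.two_le
        simp only at hab
        omega
      have hcardT : T.card = Podd.card := Finset.card_image_of_injOn hinj
      have hsumT : ∑ x ∈ T, x = ∑ p ∈ Podd, (p - 1) :=
        Finset.sum_image (fun a ha b hb => hinj ha hb)
      have := card_sq_le_two_sum_add T
      rw [hcardT, hsumT] at this
      exact this
    have hPk : Podd.card ≤ k := by
      have h1 : Podd.card ≤ ∑ p ∈ Podd, (p - 1) := by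
        have := Finset.card_nsmul_le_sum Podd (fun p => p - 1) 1
          (fun p hp => by have h2 := (hPfact p hp).1.two_le; show 1 ≤ p - 1; omega)
        simpa using this
      omega
    have hPP : Podd.card * Podd.card ≤ 3 * k := by
      calc Podd.card * Podd.card ≤ 2 * (∑ p ∈ Podd, (p - 1)) + Podd.card := hcards
        _ ≤ 2 * k + k := add_le_add (Nat.mul_le_mul_left 2 hsum) hPk
        _ = 3 * k := by ring
    have ht1 : n.primeFactors.card ≤ Podd.card + 1 := by
      have hsub : n.primeFactors ⊆ Podd ∪ {2} := by
        intro x hx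
        by_cases hx2 : x = 2
        · simp [hx2]
        · exact Finset.mem_union_left _ (Finset.mem_filter.mpr ⟨hx, hx2⟩)
      calc n.primeFactors.card ≤ (Podd ∪ {2}).card := Finset.card_le_card hsub
        _ ≤ Podd.card + ({2} : Finset ℕ).card := Finset.card_union_le _ _
        _ = Podd.card + 1 := by rw [Finset.card_singleton]
    calc n.primeFactors.card * n.primeFactors.card
        ≤ (Podd.card + 1) * (Podd.card + 1) := Nat.mul_le_mul ht1 ht1
      _ = Podd.card * Podd.card + 2 * Podd.card + 1 := by ring
      _ ≤ 3 * k + 2 * k + k := by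
          refine add_le_add (add_le_add hPP (Nat.mul_le_mul_left 2 hPk)) ?_
          omega
      _ = 6 * k := by ring

end Stmt8

/-- There is an absolute constant `c > 0` such that every
connected integral circulant graph `G(n;S)` of degree `k = #S ≥ 2` satisfies
`n ≤ exp(c·√(k·log log(k+2))·log k)`. -/
theorem stmt_8 : ∃ c : ℝ, 0 < c ∧
    ∀ (n k : ℕ), 0 < n → 2 ≤ k →
    ∀ S : Finset ℕ, S.card = k →
      (∀ s ∈ S, 1 ≤ s ∧ s ≤ n - 1) → (∀ s ∈ S, n - s ∈ S) →
    ∀ G : SimpleGraph (ZMod n), (∀ u v : ZMod n, G.Adj u v ↔ (u - v).val ∈ S) →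
      G.Connected →
      (∀ j : ZMod n, ∃ m : ℤ, ∑ s ∈ S, Complex.exp (2 * π * I * j.val * s / n) = m) →
      (n : ℝ) ≤ Real.exp (c * Real.sqrt (k * Real.log (Real.log (k + 2))) * Real.log k) := by
  have h41 : (1:ℝ) < Real.log 4 := by
    rw [Real.lt_log_iff_exp_lt (by norm_num : (0:ℝ) < 4)]
    calc Real.exp 1 < 2.7182818286 := Real.exp_one_lt_d9
      _ < 4 := by norm_num
  have hβ : 0 < Real.log (Real.log 4) := Real.log_pos h41
  set β := Real.log (Real.log 4) with hβdef
  have hsβ : 0 < Real.sqrt β := Real.sqrt_pos.mpr hβ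
  refine ⟨6 / Real.sqrt β, by positivity, ?_⟩
  intro n k hn hk S hcard hS1 _hSsym G hAdj hconn hInt
  haveI : NeZero n := ⟨hn.ne'⟩
  have hint_nat : ∀ j : ℕ, j < n → ∃ m : ℤ,
      ∑ s ∈ S, (Complex.exp (2 * ↑Real.pi * Complex.I / n)) ^ (j * s) = (m : ℂ) := by
    intro j hj
    obtain ⟨m, hm⟩ := hInt (j : ZMod n)
    refine ⟨m, ?_⟩
    rw [← hm, ZMod.val_natCast_of_lt hj]
    refine Finset.sum_congr rfl fun s _ => ?_
    rw [← Complex.exp_nat_mul]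
    congr 1
    push_cast
    ring
  have Hclosed : ∀ s ∈ S, ∀ t : ℕ, 1 ≤ t → t < n → Nat.gcd t n = Nat.gcd s n → t ∈ S :=
    fun s hs t h1 h2 h3 => Stmt8.class_closed n hn S hS1 hint_nat hs h1 h2 h3
  have Hprime : ∀ p : ℕ, p.Prime → p ∣ n → ∃ s ∈ S, ¬ p ∣ s :=
    fun p hp hpn => Stmt8.exists_not_dvd n hn S G hAdj hconn hp hpn
  obtain ⟨hnle, htt⟩ := Stmt8.main_bound n k hn hk S hcard hS1 Hclosed Hprime
  set t := n.primeFactors.card with htdef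
  have hk1 : (1:ℝ) ≤ (k:ℝ) := by exact_mod_cast le_trans one_le_two hk
  have hk2 : (2:ℝ) ≤ (k:ℝ) := by exact_mod_cast hk
  have hkpos : (0:ℝ) < (k:ℝ) := by linarith
  have hlogk : 0 ≤ Real.log k := Real.log_nonneg hk1
  have h1 : (n:ℝ) ≤ ((2*k : ℕ):ℝ) ^ t := by exact_mod_cast hnle
  have h2 : ((2*k : ℕ):ℝ) ≤ (k:ℝ)^2 := by push_cast; nlinarith
  have h3 : (n:ℝ) ≤ (k:ℝ) ^ (2*t) := by
    calc (n:ℝ) ≤ ((2*k:ℕ):ℝ)^t := h1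
      _ ≤ ((k:ℝ)^2)^t := pow_le_pow_left₀ (by positivity) h2 t
      _ = (k:ℝ)^(2*t) := by rw [← pow_mul]
  have h4 : (k:ℝ) ^ (2*t) = Real.exp (Real.log (k:ℝ) * ((2*t : ℕ):ℝ)) := by
    rw [← Real.rpow_natCast (k:ℝ) (2*t), Real.rpow_def_of_pos hkpos]
  have hll : β ≤ Real.log (Real.log ((k:ℝ) + 2)) := by
    have e0 : (0:ℝ) < Real.log 4 := by linarith
    have e1 : Real.log 4 ≤ Real.log ((k:ℝ) + 2) := by
      apply Real.log_le_log (by norm_num)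
      linarith
    exact Real.log_le_log e0 e1
  have hsq : Real.sqrt ((k:ℝ) * Real.log (Real.log ((k:ℝ) + 2)))
      = Real.sqrt (k:ℝ) * Real.sqrt (Real.log (Real.log ((k:ℝ) + 2))) :=
    Real.sqrt_mul (by positivity) _
  have htreal : (t:ℝ) ≤ Real.sqrt (6*(k:ℝ)) := by
    rw [show ((t:ℕ):ℝ) = Real.sqrt (((t*t : ℕ)):ℝ) by
      push_cast
      rw [show ((t:ℝ) * t) = (t:ℝ)^2 by ring, Real.sqrt_sq (by positivity)]]
    apply Real.sqrt_le_sqrt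
    exact_mod_cast htt
  have h6k : Real.sqrt (6*(k:ℝ)) ≤ 3 * Real.sqrt (k:ℝ) := by
    have e2 : (6:ℝ)*k ≤ 9*k := by linarith
    calc Real.sqrt (6*(k:ℝ)) ≤ Real.sqrt (9*(k:ℝ)) := Real.sqrt_le_sqrt e2
      _ = 3 * Real.sqrt (k:ℝ) := by
        rw [show (9:ℝ)*(k:ℝ) = 3^2*(k:ℝ) by ring, Real.sqrt_mul (by positivity),
          Real.sqrt_sq (by norm_num)]
  have h2t : ((2*t : ℕ):ℝ) ≤ 6 * Real.sqrt (k:ℝ) := by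
    push_cast
    calc (2:ℝ)*t ≤ 2*(3*Real.sqrt (k:ℝ)) := by
          have := htreal.trans h6k
          linarith
      _ = 6 * Real.sqrt (k:ℝ) := by ring
  have hrhs : 6 * Real.sqrt (k:ℝ)
      ≤ (6 / Real.sqrt β) * Real.sqrt ((k:ℝ) * Real.log (Real.log ((k:ℝ) + 2))) := by
    rw [hsq]
    have hsb : Real.sqrt β ≤ Real.sqrt (Real.log (Real.log ((k:ℝ) + 2))) :=
      Real.sqrt_le_sqrt hll
    calc 6 * Real.sqrt (k:ℝ) = (6/Real.sqrt β) * (Real.sqrt (k:ℝ) * Real.sqrt β) := by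
          field_simp
      _ ≤ (6/Real.sqrt β) * (Real.sqrt (k:ℝ) * Real.sqrt (Real.log (Real.log ((k:ℝ) + 2)))) := by
          apply mul_le_mul_of_nonneg_left _ (by positivity)
          exact mul_le_mul_of_nonneg_left hsb (Real.sqrt_nonneg _)
  calc (n:ℝ) ≤ (k:ℝ)^(2*t) := h3
    _ = Real.exp (Real.log (k:ℝ) * ((2*t : ℕ):ℝ)) := h4
    _ ≤ Real.exp (6 / Real.sqrt β * Real.sqrt ((k:ℝ) * Real.log (Real.log ((k:ℝ) + 2)))
        * Real.log (k:ℝ)) := by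
        apply Real.exp_le_exp.mpr
        rw [mul_comm (Real.log (k:ℝ))]
        exact mul_le_mul_of_nonneg_right (h2t.trans hrhs) hlogk
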